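/- Path object argument: Let C be a category with finite products, equipped with classes of weak equivalences (satisfying 2-out-of-3 and retract closure), fibrations, and trivial cofibrations defined by left lifting against fibrations. Assume every object is fibrant (the map to the terminal object is a fibration) and every object B admits a factorization of the diagonal B → B × B as a weak equivalence D : B → PB followed by a fibration PB → B × B. Then every trivial cofibration is a weak equivalence. -/

import Mathlib

/-!
STATEMENT 11: Path object argument. Let `C` have binary products and a terminal object, with a
class `W` of weak equivalences (containing identities, satisfying 2-out-of-3 and closed under
retracts) and a class `Fib` of fibrations. Assume every object is fibrant, and every object
`B` admits a factorization of the diagonal `B ⟶ B ⨯ B` as a weak equivalence followed by a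
fibration. Then every trivial cofibration (map with the left lifting property with respect to
fibrations) is a weak equivalence.
-/

open CategoryTheory CategoryTheory.Limits

theorem trivial_cofibrations_are_weak_equivalences
    {C : Type u} [Category.{v} C] [HasBinaryProducts C] [HasTerminal C]
    (W Fib : MorphismProperty C)
    (hW_id : ∀ X : C, W (𝟙 X))
    (hW_comp : ∀ {X Y Z : C} (f : X ⟶ Y) (g : Y ⟶ Z), W f → W g → W (f ≫ g))
    (hW_cancel_left : ∀ {X Y Z : C} (f : X ⟶ Y) (g : Y ⟶ Z), W f → W (f ≫ g) → W g)
    (hW_cancel_right : ∀ {X Y Z : C} (f : X ⟶ Y) (g : Y ⟶ Z), W g → W (f ≫ g) → W f)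
    (hW_retract : ∀ {X Y X' Y' : C} (f : X ⟶ Y) (g : X' ⟶ Y')
      (i : Arrow.mk f ⟶ Arrow.mk g) (r : Arrow.mk g ⟶ Arrow.mk f),
      i ≫ r = 𝟙 (Arrow.mk f) → W g → W f)
    -- every object is fibrant
    (hfibrant : ∀ X : C, Fib (terminal.from X))
    -- path objects
    (hpath : ∀ B : C, ∃ (PB : C) (D : B ⟶ PB) (p : PB ⟶ B ⨯ B),
      W D ∧ Fib p ∧ D ≫ p = prod.lift (𝟙 B) (𝟙 B)) :
    ∀ {A B : C} (F : A ⟶ B),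
      (∀ {U V : C} (q : U ⟶ V), Fib q → HasLiftingProperty F q) → W F := by
  intro A B F hF
  obtain ⟨PB, D, p, hD, hp, hDp⟩ := hpath B
  -- retraction G : F ≫ G = 𝟙 A
  haveI := hF (terminal.from A) (hfibrant A)
  have sq1 : CommSq (𝟙 A) F (terminal.from A) (terminal.from B) :=
    ⟨by apply Subsingleton.elim⟩
  obtain ⟨G, hG⟩ : ∃ G : B ⟶ A, F ≫ G = 𝟙 A := ⟨sq1.lift, sq1.fac_left⟩
  -- lift against the path object fibration
  haveI := hF p hp
  have sq2 : CommSq (F ≫ D) F p (prod.lift (𝟙 B) (G ≫ F)) := by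
    constructor
    rw [Category.assoc, hDp]
    apply Limits.prod.hom_ext <;> simp [reassoc_of% hG]
  obtain ⟨H, hH2⟩ : ∃ H : B ⟶ PB, H ≫ p = prod.lift (𝟙 B) (G ≫ F) :=
    ⟨sq2.lift, sq2.fac_right⟩
  have hfst : W (p ≫ prod.fst) := by
    apply hW_cancel_left D _ hD
    have : D ≫ p ≫ prod.fst = 𝟙 B := by rw [reassoc_of% hDp]; exact prod.lift_fst _ _
    rw [this]; exact hW_id B
  have hsnd : W (p ≫ prod.snd) := by
    apply hW_cancel_left D _ hD
    have : D ≫ p ≫ prod.snd = 𝟙 B := by rw [reassoc_of% hDp]; exact prod.lift_snd _ _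
    rw [this]; exact hW_id B
  have hH : W H := by
    apply hW_cancel_right H (p ≫ prod.fst) hfst
    have : H ≫ p ≫ prod.fst = 𝟙 B := by rw [reassoc_of% hH2]; exact prod.lift_fst _ _
    rw [this]; exact hW_id B
  have hGF : W (G ≫ F) := by
    have : H ≫ p ≫ prod.snd = G ≫ F := by rw [reassoc_of% hH2]; exact prod.lift_snd _ _
    rw [← this]
    exact hW_comp _ _ hH hsnd
  -- F is a retract of G ≫ F
  refine hW_retract F (G ≫ F)
    (Arrow.homMk (u := F) (v := 𝟙 B) ?_)
    (Arrow.homMk (u := G) (v := 𝟙 B) ?_) ?_ hGF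
  · simp [reassoc_of% hG]
  · simp
  · ext
    · exact hG
    · simp
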